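/- For the 3-step nilpotent Lie algebra g_{5,3} ([a,b]=d, [a,d]=e, [b,c]=e) with bracket μ, and the cocycle ν2 defined by ν2(a,b)=b, ν2(a,c)=−c, ν2(a,d)=−d (zero on other basis pairs), the bilinear map μ + tν2 is a Lie bracket (satisfies Jacobi) for every t ∈ ℝ, and for t ≠ 0 the resulting Lie algebra is solvable but not nilpotent. -/
import Mathlib


noncomputable section

/-- Standard basis vector of `ℝ⁵`. -/
def e (k : Fin 5) : Fin 5 → ℝ := Pi.single k 1

/-- Structure constants of `g_{5,3}`: `[a,b]=d, [a,d]=e, [b,c]=e`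
(basis `a,…,e = e 0,…,e 4`), extended antisymmetrically. -/
def tbl : Fin 5 → Fin 5 → Fin 5 → ℝ :=
  ![![0, e 3, 0, e 4, 0],
    ![-e 3, 0, e 4, 0, 0],
    ![0, -e 4, 0, 0, 0],
    ![-e 4, 0, 0, 0, 0],
    ![0, 0, 0, 0, 0]]

/-- The bracket `μ` of `g_{5,3}`. -/
def br (x y : Fin 5 → ℝ) : Fin 5 → ℝ :=
  ∑ p : Fin 5, ∑ q : Fin 5, (x p * y q) • tbl p q

/-- Structure constants of the cocycle `ν₂`: `ν₂(a,b)=b, ν₂(a,c)=−c, ν₂(a,d)=−d`,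
zero on other basis pairs, extended antisymmetrically. -/
def tblν : Fin 5 → Fin 5 → Fin 5 → ℝ :=
  ![![0, e 1, -e 2, -e 3, 0],
    ![-e 1, 0, 0, 0, 0],
    ![e 2, 0, 0, 0, 0],
    ![e 3, 0, 0, 0, 0],
    ![0, 0, 0, 0, 0]]

/-- The bilinear map `ν₂`. -/
def ν (x y : Fin 5 → ℝ) : Fin 5 → ℝ :=
  ∑ p : Fin 5, ∑ q : Fin 5, (x p * y q) • tblν p q

/-- The deformed bracket `μ + t ν₂`. -/
def brt (t : ℝ) (x y : Fin 5 → ℝ) : Fin 5 → ℝ := br x y + t • ν x y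

/-- Lower central series of a bracket. -/
def lcs (μ : (Fin 5 → ℝ) → (Fin 5 → ℝ) → (Fin 5 → ℝ)) : ℕ → Submodule ℝ (Fin 5 → ℝ)
  | 0 => ⊤
  | j + 1 => Submodule.span ℝ {w | ∃ u ∈ lcs μ j, ∃ v, w = μ u v}

/-- Derived series of a bracket. -/
def ds (μ : (Fin 5 → ℝ) → (Fin 5 → ℝ) → (Fin 5 → ℝ)) : ℕ → Submodule ℝ (Fin 5 → ℝ)
  | 0 => ⊤
  | j + 1 => Submodule.span ℝ {w | ∃ u ∈ ds μ j, ∃ v ∈ ds μ j, w = μ u v}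

set_option maxHeartbeats 1000000 in
lemma br_eq (x y : Fin 5 → ℝ) :
    br x y = (x 0*y 1 - x 1*y 0) • e 3
      + ((x 0*y 3 - x 3*y 0) + (x 1*y 2 - x 2*y 1)) • e 4 := by
  simp only [br, Fin.sum_univ_five, tbl, Matrix.cons_val_zero, Matrix.cons_val_one,
    Matrix.head_cons, Matrix.cons_val_two, Matrix.tail_cons, Matrix.cons_val_three,
    Matrix.cons_val_four]
  module

set_option maxHeartbeats 1000000 in
lemma ν_eq (x y : Fin 5 → ℝ) :
    ν x y = (x 0*y 1 - x 1*y 0) • e 1 - (x 0*y 2 - x 2*y 0) • e 2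
      - (x 0*y 3 - x 3*y 0) • e 3 := by
  simp only [ν, Fin.sum_univ_five, tblν, Matrix.cons_val_zero, Matrix.cons_val_one,
    Matrix.head_cons, Matrix.cons_val_two, Matrix.tail_cons, Matrix.cons_val_three,
    Matrix.cons_val_four]
  module

set_option maxHeartbeats 1000000 in
lemma brt_eq (t : ℝ) (x y : Fin 5 → ℝ) :
    brt t x y = ![0, t*(x 0*y 1 - x 1*y 0), -(t*(x 0*y 2 - x 2*y 0)),
      (x 0*y 1 - x 1*y 0) - t*(x 0*y 3 - x 3*y 0),
      (x 0*y 3 - x 3*y 0) + (x 1*y 2 - x 2*y 1)] := by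
  rw [brt, br_eq, ν_eq]
  funext i
  fin_cases i <;> simp [e, Pi.single_apply] <;> ring

/-- The subspace `{v | v 0 = 0}`. -/
def V0 : Submodule ℝ (Fin 5 → ℝ) where
  carrier := {v | v 0 = 0}
  add_mem' := by intro a b ha hb; simp only [Set.mem_setOf_eq, Pi.add_apply] at *; rw [ha, hb]; ring
  zero_mem' := rfl
  smul_mem' := by intro c a ha; simp only [Set.mem_setOf_eq, Pi.smul_apply] at *; simp [ha]

/-- The subspace spanned by `e 4`. -/
def V4 : Submodule ℝ (Fin 5 → ℝ) where
  carrier := {v | v 0 = 0 ∧ v 1 = 0 ∧ v 2 = 0 ∧ v 3 = 0}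
  add_mem' := by
    rintro a b ⟨h0, h1, h2, h3⟩ ⟨g0, g1, g2, g3⟩
    refine ⟨?_, ?_, ?_, ?_⟩ <;> simp only [Pi.add_apply] <;>
      simp [h0, h1, h2, h3, g0, g1, g2, g3]
  zero_mem' := ⟨rfl, rfl, rfl, rfl⟩
  smul_mem' := by
    rintro c a ⟨h0, h1, h2, h3⟩
    refine ⟨?_, ?_, ?_, ?_⟩ <;> simp only [Pi.smul_apply] <;> simp [h0, h1, h2, h3]

set_option maxHeartbeats 1000000 in
/-- `μ + tν₂` is a Lie bracket for every `t ∈ ℝ`, and for `t ≠ 0` the resulting Lie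
algebra is solvable but not nilpotent. -/
theorem g53_deformation_solvable_not_nilpotent :
    (∀ t : ℝ, ∀ x y z : Fin 5 → ℝ,
      brt t (brt t x y) z + brt t (brt t y z) x + brt t (brt t z x) y = 0) ∧
    (∀ t : ℝ, t ≠ 0 →
      (∃ j : ℕ, ds (brt t) j = ⊥) ∧ (∀ j : ℕ, lcs (brt t) j ≠ ⊥)) := by
  constructor
  · intro t x y z
    simp only [brt_eq]
    funext i
    fin_cases i <;> simp <;> ring
  · intro t ht
    constructor
    · -- solvable: ds 3 = ⊥
      have h1 : ds (brt t) 1 ≤ V0 := by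
        simp only [ds]
        rw [Submodule.span_le]
        rintro w ⟨u, -, v, -, rfl⟩
        show (brt t u v) 0 = 0
        rw [brt_eq]; rfl
      have h2 : ds (brt t) 2 ≤ V4 := by
        show ds (brt t) (1+1) ≤ V4
        simp only [ds]
        rw [Submodule.span_le]
        rintro w ⟨u, hu, v, hv, rfl⟩
        have hu0 : u 0 = 0 := h1 hu
        have hv0 : v 0 = 0 := h1 hv
        refine ⟨?_, ?_, ?_, ?_⟩ <;> rw [brt_eq] <;> simp [hu0, hv0]
      refine ⟨3, le_bot_iff.1 ?_⟩
      show ds (brt t) (2+1) ≤ ⊥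
      simp only [ds]
      rw [Submodule.span_le]
      rintro w ⟨u, hu, v, hv, rfl⟩
      obtain ⟨hu0, hu1, hu2, hu3⟩ := h2 hu
      obtain ⟨hv0, hv1, hv2, hv3⟩ := h2 hv
      simp only [SetLike.mem_coe, Submodule.mem_bot]
      funext i
      fin_cases i <;> simp [brt_eq, hu0, hu1, hu2, hu3, hv0, hv1, hv2, hv3]
    · -- not nilpotent: e 2 ∈ lcs j for all j
      have hb : brt t (e 2) (e 0) = t • e 2 := by
        funext i
        fin_cases i <;> simp [brt_eq, e, Pi.single_apply]
      have key : ∀ j, e 2 ∈ lcs (brt t) j := by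
        intro j
        induction j with
        | zero => trivial
        | succ j ih =>
          have hmem : t • e 2 ∈ lcs (brt t) (j+1) :=
            Submodule.subset_span ⟨e 2, ih, e 0, hb.symm⟩
          have := Submodule.smul_mem _ t⁻¹ hmem
          rwa [smul_smul, inv_mul_cancel₀ ht, one_smul] at this
      intro j hj
      have := key j
      rw [hj, Submodule.mem_bot] at this
      have h2 : (e 2) 2 = (0:ℝ) := by rw [this]; rfl
      simp [e] at h2
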